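/- Let d ≥ 2 be an integer and λ ∈ ℝ. There exists a continuously differentiable function u : [0,1] → ℝ with u'(r) = -u(r)² - dλ for all r ∈ [0,1] and ∫₀¹ u(r) dr = D if and only if λ < π²/d. Moreover, when λ < π²/d this solution is unique. -/

import Mathlib

open Real Set

lemma cos_pos_between {α β θ : ℝ} (hα : 0 < Real.cos α) (hβ : 0 < Real.cos β)
    (hlen : β - α < π) (h1 : α ≤ θ) (h2 : θ ≤ β) : 0 < Real.cos θ := by
  by_contra h
  push_neg at h
  set k : ℤ := ⌊(θ - π / 2) / (2 * π)⌋ with hk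
  have hπ : (0:ℝ) < 2 * π := by positivity
  have hfl1 : (k : ℝ) ≤ (θ - π / 2) / (2 * π) := Int.floor_le _
  have hfl2 : (θ - π / 2) / (2 * π) < k + 1 := Int.lt_floor_add_one _
  have hb1 : π / 2 ≤ θ - k * (2 * π) := by
    have := (le_div_iff₀ hπ).mp hfl1; linarith
  have hb2 : θ - k * (2 * π) < π / 2 + 2 * π := by
    have := (div_lt_iff₀ hπ).mp hfl2; linarith
  set s : ℝ := (k : ℝ) * (2 * π) with hs
  have hcθ : Real.cos (θ - s) = Real.cos θ := Real.cos_sub_int_mul_two_pi θ k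
  have hcα : Real.cos (α - s) = Real.cos α := Real.cos_sub_int_mul_two_pi α k
  have hcβ : Real.cos (β - s) = Real.cos β := Real.cos_sub_int_mul_two_pi β k
  have hθ3 : θ - s ≤ π + π / 2 := by
    by_contra h3
    push_neg at h3
    have : 0 < Real.cos (θ - s - 2 * π) := by
      apply Real.cos_pos_of_mem_Ioo
      constructor <;> [linarith; linarith]
    rw [Real.cos_sub_two_pi, hcθ] at this
    linarith
  have hα2 : α - s < π / 2 := by
    by_contra h4
    push_neg at h4
    have : Real.cos (α - s) ≤ 0 :=
      Real.cos_nonpos_of_pi_div_two_le_of_le h4 (by linarith)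
    rw [hcα] at this; linarith
  have hβ2 : π + π / 2 < β - s := by
    by_contra h5
    push_neg at h5
    have : Real.cos (β - s) ≤ 0 :=
      Real.cos_nonpos_of_pi_div_two_le_of_le (by linarith) h5
    rw [hcβ] at this; linarith
  linarith

lemma sol_of_linear (c D : ℝ) (y yd : ℝ → ℝ)
    (hyc : ContDiff ℝ 1 y) (hydc : ContDiff ℝ 1 yd)
    (hyd : ∀ r, HasDerivAt y (yd r) r)
    (hydd : ∀ r, HasDerivAt yd (-(c * y r)) r)
    (hpos : ∀ r ∈ Icc (0:ℝ) 1, 0 < y r)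
    (hy0 : y 0 = 1) (hy1 : y 1 = Real.exp D) :
    ∃ u : ℝ → ℝ, ContDiffOn ℝ 1 u (Icc 0 1) ∧
      (∀ r ∈ Icc (0:ℝ) 1, HasDerivWithinAt u (-(u r) ^ 2 - c) (Icc 0 1) r) ∧
      ∫ r in (0:ℝ)..1, u r = D := by
  set u : ℝ → ℝ := fun r => yd r / y r with hu
  have hne : ∀ r ∈ Icc (0:ℝ) 1, y r ≠ 0 := fun r hr => (hpos r hr).ne'
  have hcd : ContDiffOn ℝ 1 u (Icc 0 1) :=
    hydc.contDiffOn.div hyc.contDiffOn hne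
  refine ⟨u, hcd, ?_, ?_⟩
  · intro r hr
    have h := (hydd r).div (hyd r) (hne r hr)
    have heq : (-(c * y r) * y r - yd r * yd r) / y r ^ 2 = -(u r) ^ 2 - c := by
      have h0 := hne r hr
      field_simp [hu]
      rw [show u r = yd r / y r from rfl]; field_simp; ring
    rw [heq] at h
    exact h.hasDerivWithinAt
  · have hlog : ∀ x ∈ uIcc (0:ℝ) 1, HasDerivAt (fun r => Real.log (y r)) (u x) x := by
      intro x hx
      rw [uIcc_of_le zero_le_one] at hx
      exact (hyd x).log (hne x hx)
    have hint : IntervalIntegrable u MeasureTheory.volume 0 1 := by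
      apply ContinuousOn.intervalIntegrable
      rw [uIcc_of_le zero_le_one]
      exact hcd.continuousOn
    rw [intervalIntegral.integral_eq_sub_of_hasDerivAt hlog hint, hy0, hy1,
      Real.log_exp, Real.log_one, sub_zero]

lemma exists_sol (c D : ℝ) (hc : c < π ^ 2) :
    ∃ u : ℝ → ℝ, ContDiffOn ℝ 1 u (Icc 0 1) ∧
      (∀ r ∈ Icc (0:ℝ) 1, HasDerivWithinAt u (-(u r) ^ 2 - c) (Icc 0 1) r) ∧
      ∫ r in (0:ℝ)..1, u r = D := by
  rcases lt_trichotomy c 0 with hneg | hzero | hposc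
  · -- c < 0
    set ω : ℝ := Real.sqrt (-c) with hω
    have hω0 : 0 < ω := Real.sqrt_pos.mpr (by linarith)
    have hω2 : ω ^ 2 = -c := Real.sq_sqrt (by linarith)
    have hden : (0:ℝ) < Real.exp ω - Real.exp (-ω) := by
      have := Real.exp_lt_exp.mpr (show -ω < ω by linarith)
      linarith
    have hden' : Real.exp ω - Real.exp (-ω) ≠ 0 := hden.ne'
    have hexp : Real.exp (-ω) * Real.exp ω = 1 := by
      rw [← Real.exp_add]; simp
    set A : ℝ := (Real.exp D - Real.exp (-ω)) / (Real.exp ω - Real.exp (-ω)) with hA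
    set B : ℝ := (Real.exp ω - Real.exp D) / (Real.exp ω - Real.exp (-ω)) with hB
    have hAB : A + B = 1 := by
      rw [hA, hB]; field_simp; ring
    apply sol_of_linear c D
      (fun r => A * Real.exp (ω * r) + B * Real.exp (-(ω * r)))
      (fun r => A * ω * Real.exp (ω * r) - B * ω * Real.exp (-(ω * r)))
    · exact ((contDiff_const.mul (((contDiff_const.mul contDiff_id)).exp)).add
        (contDiff_const.mul (((contDiff_const.mul contDiff_id)).neg.exp)))
    · exact ((contDiff_const.mul (((contDiff_const.mul contDiff_id)).exp)).sub
        (contDiff_const.mul (((contDiff_const.mul contDiff_id)).neg.exp)))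
    · intro r
      have hbase : HasDerivAt (fun t : ℝ => ω * t) ω r := by
        simpa using (hasDerivAt_id r).const_mul ω
      have h1 := hbase.exp
      have h2 := hbase.neg.exp
      have := (h1.const_mul A).add (h2.const_mul B)
      convert this using 1
      rfl
      rfl
      rfl
      simp only [Pi.neg_apply]
      ring
    · intro r
      have hbase : HasDerivAt (fun t : ℝ => ω * t) ω r := by
        simpa using (hasDerivAt_id r).const_mul ω
      have h1 := hbase.exp
      have h2 := hbase.neg.exp
      have := ((h1.const_mul (A * ω)).sub (h2.const_mul (B * ω)))
      convert this using 1
      rfl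
      rfl
      rfl
      have hcc : c = -ω ^ 2 := by linarith
      simp only [Pi.neg_apply]
      rw [hcc]; ring
    · intro r hr
      have ht1 : (1:ℝ) ≤ Real.exp (2 * (ω * r)) := by
        rw [show (1:ℝ) = Real.exp 0 by simp]
        exact Real.exp_le_exp.mpr (by nlinarith [hr.1])
      have ht2 : Real.exp (2 * (ω * r)) ≤ Real.exp (2 * ω) := by
        exact Real.exp_le_exp.mpr (by nlinarith [hr.2])
      have hT : Real.exp (2 * ω) = Real.exp ω * Real.exp ω := by
        rw [← Real.exp_add]; ring_nf
      have hv1 : A * Real.exp (2 * ω) + B = Real.exp ω * Real.exp D := by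
        rw [hT, hA, hB]
        field_simp
        linear_combination (Real.exp D - Real.exp ω) * hexp
      have key : 0 < A * Real.exp (2 * (ω * r)) + B := by
        rcases le_or_gt 0 A with hA0 | hA0
        · nlinarith [mul_nonneg hA0 (sub_nonneg.2 ht1)]
        · nlinarith [mul_nonneg (neg_pos.2 hA0).le (sub_nonneg.2 ht2),
            mul_pos (Real.exp_pos ω) (Real.exp_pos D)]
      have hsplit : A * Real.exp (ω * r) + B * Real.exp (-(ω * r))
          = Real.exp (-(ω * r)) * (A * Real.exp (2 * (ω * r)) + B) := by
        rw [show (2:ℝ) * (ω * r) = ω * r + ω * r by ring, Real.exp_add, Real.exp_neg]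
        have := Real.exp_ne_zero (ω * r)
        field_simp
      rw [hsplit]
      exact mul_pos (Real.exp_pos _) key
    · simp [hAB]
    · rw [mul_one, hA, hB, div_mul_eq_mul_div, div_mul_eq_mul_div, ← add_div,
        div_eq_iff hden']
      ring
  · -- c = 0
    subst hzero
    apply sol_of_linear 0 D (fun r => 1 + (Real.exp D - 1) * r) (fun _ => Real.exp D - 1)
    · exact contDiff_const.add (contDiff_const.mul contDiff_id)
    · exact contDiff_const
    · intro r
      simpa using ((hasDerivAt_id r).const_mul (Real.exp D - 1)).const_add 1
    · intro r
      simpa using hasDerivAt_const r (Real.exp D - 1)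
    · intro r hr
      rcases le_or_gt 1 (Real.exp D) with h | h
      · nlinarith [mul_nonneg (sub_nonneg.2 h) hr.1]
      · nlinarith [Real.exp_pos D, mul_le_mul_of_nonneg_left hr.2 (sub_nonneg.2 h.le), hr.2]
    · simp
    · simp
  · -- 0 < c < π²
    set ω : ℝ := Real.sqrt c with hω
    have hω0 : 0 < ω := Real.sqrt_pos.mpr hposc
    have hω2 : ω ^ 2 = c := Real.sq_sqrt hposc.le
    have hωπ : ω < π := by
      rw [hω]; exact (Real.sqrt_lt' Real.pi_pos).mpr hc
    have hsin : 0 < Real.sin ω := Real.sin_pos_of_pos_of_lt_pi hω0 hωπ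
    set B : ℝ := (Real.exp D - Real.cos ω) / Real.sin ω with hB
    have hy1 : Real.cos ω + B * Real.sin ω = Real.exp D := by
      rw [hB]; field_simp; ring
    apply sol_of_linear c D
      (fun r => Real.cos (ω * r) + B * Real.sin (ω * r))
      (fun r => -ω * Real.sin (ω * r) + B * ω * Real.cos (ω * r))
    · exact (((contDiff_const.mul contDiff_id)).cos.add
        (contDiff_const.mul ((contDiff_const.mul contDiff_id)).sin))
    · exact ((contDiff_const.mul ((contDiff_const.mul contDiff_id)).sin).add
        (contDiff_const.mul ((contDiff_const.mul contDiff_id)).cos))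
    · intro r
      have hbase : HasDerivAt (fun t : ℝ => ω * t) ω r := by
        simpa using (hasDerivAt_id r).const_mul ω
      have h1 := hbase.cos
      have h2 := hbase.sin
      have := h1.add (h2.const_mul B)
      convert this using 1
      rfl
      rfl
      rfl
      ring
    · intro r
      have hbase : HasDerivAt (fun t : ℝ => ω * t) ω r := by
        simpa using (hasDerivAt_id r).const_mul ω
      have h1 := hbase.cos
      have h2 := hbase.sin
      have := (h2.const_mul (-ω)).add (h1.const_mul (B * ω))
      convert this using 1
      rfl
      rfl
      rfl
      have hcc : c = ω ^ 2 := hω2.symm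
      rw [hcc]; ring
    · intro r hr
      set R : ℝ := Real.sqrt (1 + B ^ 2) with hR
      have hR0 : 0 < R := Real.sqrt_pos.mpr (by positivity)
      set φ : ℝ := Real.arctan B with hφ
      have hrep : ∀ t : ℝ, Real.cos (ω * t) + B * Real.sin (ω * t) = R * Real.cos (ω * t - φ) := by
        intro t
        rw [Real.cos_sub, hφ, Real.cos_arctan, Real.sin_arctan, hR]
        have h1 : Real.sqrt (1 + B ^ 2) ≠ 0 := by positivity
        field_simp
      have hcα : 0 < Real.cos (ω * 0 - φ) := by
        have h0 : Real.cos (ω * 0) + B * Real.sin (ω * 0) = 1 := by simp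
        have := hrep 0
        rw [h0] at this
        nlinarith
      have hcβ : 0 < Real.cos (ω * 1 - φ) := by
        have := hrep 1
        rw [mul_one] at this
        rw [hy1] at this
        rw [mul_one]
        nlinarith [Real.exp_pos D]
      have hcθ : 0 < Real.cos (ω * r - φ) := by
        apply cos_pos_between hcα hcβ
        · rw [mul_one, mul_zero]; linarith
        · simp only [mul_zero]
          nlinarith [hr.1]
        · rw [mul_one]
          nlinarith [hr.2]
      rw [hrep r]
      exact mul_pos hR0 hcθ
    · simp
    · rw [mul_one]; exact hy1

lemma necessity (c : ℝ) (u : ℝ → ℝ) (hcd : ContDiffOn ℝ 1 u (Icc 0 1))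
    (hode : ∀ r ∈ Icc (0:ℝ) 1, HasDerivWithinAt u (-(u r) ^ 2 - c) (Icc 0 1) r) :
    c < π ^ 2 := by
  rcases le_or_gt c 0 with hc | hc
  · nlinarith [Real.pi_pos]
  set ω : ℝ := Real.sqrt c with hω
  have hω0 : 0 < ω := Real.sqrt_pos.mpr hc
  have hω2 : ω ^ 2 = c := Real.sq_sqrt hc.le
  set φ : ℝ → ℝ := fun r => Real.arctan (u r / ω) with hφ
  have hφd : ∀ r ∈ Icc (0:ℝ) 1, HasDerivWithinAt φ (-ω) (Icc 0 1) r := by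
    intro r hr
    have hq : HasDerivWithinAt (fun t => u t / ω) ((-(u r) ^ 2 - c) / ω) (Icc 0 1) r :=
      (hode r hr).div_const ω
    have harc : HasDerivAt Real.arctan (1 / (1 + (u r / ω) ^ 2)) (u r / ω) :=
      Real.hasDerivAt_arctan (u r / ω)
    have h := harc.comp_hasDerivWithinAt r hq
    have heq : (1 / (1 + (u r / ω) ^ 2)) * ((-(u r) ^ 2 - c) / ω) = -ω := by
      rw [← hω2]
      have h1 : ω ≠ 0 := hω0.ne'
      have h2 : (0:ℝ) < 1 + (u r / ω) ^ 2 := by positivity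
      field_simp
      ring
    rw [heq] at h
    exact h
  have hcont : ContinuousOn φ (Icc 0 1) :=
    Real.continuous_arctan.comp_continuousOn (hcd.continuousOn.div_const ω)
  have hftc : ∫ _ in (0:ℝ)..1, (-ω) = φ 1 - φ 0 := by
    apply intervalIntegral.integral_eq_sub_of_hasDeriv_right_of_le zero_le_one hcont
    · intro x hx
      exact (hφd x ⟨hx.1.le, hx.2.le⟩).mono_of_mem_nhdsWithin
        (Filter.mem_of_superset (Ioc_mem_nhdsGT_of_mem ⟨le_refl x, hx.2⟩)
          (fun t ht => ⟨hx.1.le.trans ht.1.le, ht.2⟩))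
    · exact intervalIntegrable_const
  rw [intervalIntegral.integral_const] at hftc
  simp only [sub_zero, one_smul] at hftc
  have h1 : φ 0 < π / 2 := Real.arctan_lt_pi_div_two _
  have h2 : -(π / 2) < φ 1 := Real.neg_pi_div_two_lt_arctan _
  have hωπ : ω < π := by linarith
  nlinarith

lemma uniqueness (c : ℝ) (u v : ℝ → ℝ)
    (hu1 : ContDiffOn ℝ 1 u (Icc 0 1))
    (hu2 : ∀ r ∈ Icc (0:ℝ) 1, HasDerivWithinAt u (-(u r) ^ 2 - c) (Icc 0 1) r)
    (hv1 : ContDiffOn ℝ 1 v (Icc 0 1))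
    (hv2 : ∀ r ∈ Icc (0:ℝ) 1, HasDerivWithinAt v (-(v r) ^ 2 - c) (Icc 0 1) r)
    (hint : ∫ r in (0:ℝ)..1, u r = ∫ r in (0:ℝ)..1, v r) :
    EqOn u v (Icc 0 1) := by
  set proj : ℝ → ℝ := fun r => max 0 (min 1 r) with hproj
  have hprojmem : ∀ r, proj r ∈ Icc (0:ℝ) 1 := fun r =>
    ⟨le_max_left _ _, max_le zero_le_one (min_le_left _ _)⟩
  have hprojid : ∀ r ∈ Icc (0:ℝ) 1, proj r = r := by
    intro r hr
    simp only [hproj, min_eq_right hr.2, max_eq_right hr.1]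
  set p : ℝ → ℝ := fun r => -(u (proj r) + v (proj r)) with hp
  have hpc : Continuous p := by
    have h1 : ContinuousOn (fun r => -(u r + v r)) (Icc 0 1) :=
      ((hu1.continuousOn).add (hv1.continuousOn)).neg
    exact h1.comp_continuous
      (continuous_const.max (continuous_const.min continuous_id)) hprojmem
  set P : ℝ → ℝ := fun r => ∫ t in (0:ℝ)..r, p t with hP
  have hPd : ∀ x : ℝ, HasDerivAt P (p x) x := fun x =>
    (intervalIntegral.integral_hasStrictDerivAt_right
      (hpc.intervalIntegrable _ _) (hpc.stronglyMeasurableAtFilter _ _)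
      hpc.continuousAt).hasDerivAt
  have hPc : Continuous P := continuous_iff_continuousAt.mpr fun x =>
    (hPd x).continuousAt
  set g : ℝ → ℝ := fun r => (u r - v r) * Real.exp (-P r) with hg
  have hgd : ∀ r ∈ Icc (0:ℝ) 1, HasDerivWithinAt g 0 (Icc 0 1) r := by
    intro r hr
    have hw : HasDerivWithinAt (fun t => u t - v t)
        ((-(u r) ^ 2 - c) - (-(v r) ^ 2 - c)) (Icc 0 1) r :=
      (hu2 r hr).sub (hv2 r hr)
    have hE : HasDerivAt (fun t => Real.exp (-P t)) (Real.exp (-P r) * -(p r)) r :=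
      ((hPd r).neg).exp
    have h := hw.mul hE.hasDerivWithinAt
    have hpr : p r = -(u r + v r) := by rw [hp]; simp only [hprojid r hr]
    convert h using 1
    rfl
    rfl
    rfl
    rw [hpr]
    ring
  have hgdiff : DifferentiableOn ℝ g (Icc 0 1) := fun r hr =>
    (hgd r hr).differentiableWithinAt
  have hgconst : ∀ x ∈ Icc (0:ℝ) 1, g x = g 0 :=
    constant_of_derivWithin_zero hgdiff (fun x hx =>
      (hgd x ⟨hx.1, hx.2.le⟩).derivWithin (uniqueDiffOn_Icc one_pos x ⟨hx.1, hx.2.le⟩))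
  have hP0 : P 0 = 0 := intervalIntegral.integral_same
  have hw : ∀ r ∈ Icc (0:ℝ) 1, u r - v r = (u 0 - v 0) * Real.exp (P r) := by
    intro r hr
    have h := hgconst r hr
    rw [hg] at h
    simp only [hP0, neg_zero, Real.exp_zero, mul_one] at h
    have hne := Real.exp_ne_zero (-(P r))
    have : (u r - v r) = (u 0 - v 0) * (Real.exp (- P r))⁻¹ := by
      rw [← h]
      field_simp
    rw [this, ← Real.exp_neg, neg_neg]
  have huint : IntervalIntegrable u MeasureTheory.volume 0 1 := by
    apply ContinuousOn.intervalIntegrable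
    rw [uIcc_of_le zero_le_one]; exact hu1.continuousOn
  have hvint : IntervalIntegrable v MeasureTheory.volume 0 1 := by
    apply ContinuousOn.intervalIntegrable
    rw [uIcc_of_le zero_le_one]; exact hv1.continuousOn
  have hzero : ∫ r in (0:ℝ)..1, (u r - v r) = 0 := by
    rw [intervalIntegral.integral_sub huint hvint, hint, sub_self]
  have hfac : ∫ r in (0:ℝ)..1, (u r - v r)
      = (u 0 - v 0) * ∫ r in (0:ℝ)..1, Real.exp (P r) := by
    rw [← intervalIntegral.integral_const_mul]
    apply intervalIntegral.integral_congr
    intro x hx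
    rw [uIcc_of_le zero_le_one] at hx
    exact hw x hx
  have hepos : 0 < ∫ r in (0:ℝ)..1, Real.exp (P r) :=
    intervalIntegral.intervalIntegral_pos_of_pos_on
      ((Real.continuous_exp.comp hPc).intervalIntegrable 0 1)
      (fun x _ => Real.exp_pos _) one_pos
  have h0 : u 0 - v 0 = 0 := by
    rw [hfac] at hzero
    rcases mul_eq_zero.mp hzero with h | h
    · exact h
    · exact absurd h hepos.ne'
  intro r hr
  have := hw r hr
  rw [h0, zero_mul] at this
  linarith


theorem stmt_4 (d : ℕ) (hd : 2 ≤ d) (lam D : ℝ) :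
    ((∃ u : ℝ → ℝ, ContDiffOn ℝ 1 u (Set.Icc 0 1) ∧
        (∀ r ∈ Set.Icc (0:ℝ) 1,
          HasDerivWithinAt u (-(u r) ^ 2 - d * lam) (Set.Icc 0 1) r) ∧
        ∫ r in (0:ℝ)..1, u r = D) ↔ lam < Real.pi ^ 2 / d) ∧
    (∀ u v : ℝ → ℝ,
      (ContDiffOn ℝ 1 u (Set.Icc 0 1) ∧
        (∀ r ∈ Set.Icc (0:ℝ) 1,
          HasDerivWithinAt u (-(u r) ^ 2 - d * lam) (Set.Icc 0 1) r) ∧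
        ∫ r in (0:ℝ)..1, u r = D) →
      (ContDiffOn ℝ 1 v (Set.Icc 0 1) ∧
        (∀ r ∈ Set.Icc (0:ℝ) 1,
          HasDerivWithinAt v (-(v r) ^ 2 - d * lam) (Set.Icc 0 1) r) ∧
        ∫ r in (0:ℝ)..1, v r = D) →
      Set.EqOn u v (Set.Icc 0 1)) := by
  have hd0 : (0:ℝ) < d := by
    have : (2:ℝ) ≤ d := by exact_mod_cast hd
    linarith
  constructor
  · constructor
    · rintro ⟨u, h1, h2, _⟩
      have hc := necessity ((d:ℝ) * lam) u h1 h2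
      rw [lt_div_iff₀ hd0]
      linarith [hc]
    · intro hlam
      have hc : (d:ℝ) * lam < π ^ 2 := by
        have := (lt_div_iff₀ hd0).mp hlam
        linarith
      exact exists_sol ((d:ℝ) * lam) D hc
  · rintro u v ⟨hu1, hu2, hu3⟩ ⟨hv1, hv2, hv3⟩
    exact uniqueness ((d:ℝ) * lam) u v hu1 hu2 hv1 hv2 (by rw [hu3, hv3])
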